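/- Fix integers n_u ≥ 1, n_c ≥ 1, n_l ≥ 1 and constants 0 ≤ c̄ < 1, k_φ ≥ 0, and c_A ∈ (0,1) with c_A > cos(π/2 − arccos(√(1−c̄²))); set c̄_A = cos(arccos(√(1−c̄²)) + arccos(c_A)). Let A be a real n_c×n_u matrix whose rows a_1,…,a_{n_c} are unit vectors, let b ∈ ℝ^{n_c} and c ∈ ℝ^{n_c} with 0 ≤ c_j ≤ c̄ for all j, and define U_c = { u ∈ ℝ^{n_u} : ⟨a_j, u⟩ + c_j·‖u‖ ≤ b_j for all j = 1,…,n_c }. Let s ∈ U_c. Let A_L be a real n_l×n_u matrix whose rows l_1,…,l_{n_l} are unit vectors such that for every unit vector l_0 ∈ ℝ^{n_u}, the index set S = { i : ⟨l_i, l_0⟩ ≥ c_A } has at least n_u elements and l_0 is a nonnegative linear combination of { l_i : i ∈ S }. Define b_L ∈ ℝ^{n_l} by (b_L)_i = ⟨l_i, s⟩ + min over j = 1,…,n_c of [ max(⟨l_i, a_j⟩, c̄_A)·(b_j − ⟨a_j, s⟩ − c_j·‖s‖)/(1 + c_j) + max(k_φ·(c̄_A − ⟨l_i, a_j⟩), 0)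 ]. Then, with U_L = { u ∈ ℝ^{n_u} : ⟨l_i, u⟩ ≤ (b_L)_i for all i = 1,…,n_l }, one has s ∈ U_L and U_L ⊆ U_c. -/

import Mathlib

open scoped RealInnerProductSpace

private lemma inner_triple {E : Type*} [NormedAddCommGroup E] [InnerProductSpace ℝ E]
    {x y z : E} (hx : ‖x‖ = 1) (hy : ‖y‖ = 1) (hz : ‖z‖ = 1) :
    ⟪x, y⟫ * ⟪y, z⟫ - Real.sqrt (1 - ⟪x, y⟫ ^ 2) * Real.sqrt (1 - ⟪y, z⟫ ^ 2) ≤ ⟪x, z⟫ := by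
  set p : ℝ := ⟪x, y⟫ with hp
  set q : ℝ := ⟪y, z⟫ with hq
  have hyy : ⟪y, y⟫ = (1 : ℝ) := by
    rw [real_inner_self_eq_norm_sq, hy]; norm_num
  have hnx : ‖x - p • y‖ ^ 2 = 1 - p ^ 2 := by
    rw [norm_sub_sq_real, real_inner_smul_right, norm_smul, hy, hx, ← hp]
    simp [mul_one]
    ring
  have hnz : ‖z - q • y‖ ^ 2 = 1 - q ^ 2 := by
    rw [norm_sub_sq_real, real_inner_smul_right, norm_smul, hy, hz, real_inner_comm y z, ← hq]
    simp [mul_one]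
    ring
  have hinner : ⟪x - p • y, z - q • y⟫ = ⟪x, z⟫ - p * q := by
    rw [inner_sub_left, inner_sub_right, inner_sub_right, real_inner_smul_left,
      real_inner_smul_left, real_inner_smul_right, real_inner_smul_right, hyy]
    simp only [← hp, ← hq]
    ring
  have hcs := abs_real_inner_le_norm (x - p • y) (z - q • y)
  have hnx' : ‖x - p • y‖ = Real.sqrt (1 - p ^ 2) := by
    rw [← hnx, Real.sqrt_sq (norm_nonneg _)]
  have hnz' : ‖z - q • y‖ = Real.sqrt (1 - q ^ 2) := by
    rw [← hnz, Real.sqrt_sq (norm_nonneg _)]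
  rw [hinner, hnx', hnz'] at hcs
  have := (abs_le.mp hcs).1
  linarith

private lemma inner_cos_bound {E : Type*} [NormedAddCommGroup E] [InnerProductSpace ℝ E]
    {x y z : E} (hx : ‖x‖ = 1) (hy : ‖y‖ = 1) (hz : ‖z‖ = 1)
    {p0 q0 : ℝ} (hp0 : 0 ≤ p0) (hq0 : 0 ≤ q0)
    (hp : p0 ≤ ⟪x, y⟫) (hq : q0 ≤ ⟪y, z⟫) :
    Real.cos (Real.arccos p0 + Real.arccos q0) ≤ ⟪x, z⟫ := by
  set p : ℝ := ⟪x, y⟫ with hpd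
  set q : ℝ := ⟪y, z⟫ with hqd
  have hp1 : |p| ≤ 1 := by
    have := abs_real_inner_le_norm x y
    rwa [hx, hy, one_mul] at this
  have hq1 : |q| ≤ 1 := by
    have := abs_real_inner_le_norm y z
    rwa [hy, hz, one_mul] at this
  have hp1' := abs_le.mp hp1
  have hq1' := abs_le.mp hq1
  have harccos_anti : ∀ u v : ℝ, u ≤ v → Real.arccos v ≤ Real.arccos u := by
    intro u v huv
    rw [Real.arccos_eq_pi_div_two_sub_arcsin, Real.arccos_eq_pi_div_two_sub_arcsin]
    have := Real.monotone_arcsin huv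
    linarith
  have h1 : Real.arccos p ≤ Real.arccos p0 := harccos_anti p0 p hp
  have h2 : Real.arccos q ≤ Real.arccos q0 := harccos_anti q0 q hq
  have h3 : Real.arccos p0 ≤ Real.pi / 2 := Real.arccos_le_pi_div_two.mpr hp0
  have h4 : Real.arccos q0 ≤ Real.pi / 2 := Real.arccos_le_pi_div_two.mpr hq0
  have h5 : Real.cos (Real.arccos p0 + Real.arccos q0) ≤
      Real.cos (Real.arccos p + Real.arccos q) :=
    Real.cos_le_cos_of_nonneg_of_le_pi
      (add_nonneg (Real.arccos_nonneg _) (Real.arccos_nonneg _))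
      (by linarith) (by linarith)
  have h6 : Real.cos (Real.arccos p + Real.arccos q) =
      p * q - Real.sqrt (1 - p ^ 2) * Real.sqrt (1 - q ^ 2) := by
    rw [Real.cos_add, Real.cos_arccos hp1'.1 hp1'.2, Real.cos_arccos hq1'.1 hq1'.2,
      Real.sin_arccos, Real.sin_arccos]
  have h7 := inner_triple hx hy hz (x := x) (y := y) (z := z)
  rw [← hpd, ← hqd] at h7
  linarith

set_option maxHeartbeats 1000000 in
/-- Proposition 1 of the paper (the practical feasible-set reshaping formula
(42)–(43)), stated pointwise: with the rows `l i` of `A_L` forming a positive basis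
adapted to the angle `arccos c_A`, and `b_L` defined by the explicit reshaping
formula around a feasible point `s` of the quadratically constrained set `U_c`, the
reshaped polyhedron `U_L` contains `s` and is contained in `U_c`. -/
theorem stmt11 (n_u n_c n_l : ℕ) (hnu : 1 ≤ n_u) (hnc : 1 ≤ n_c) (hnl : 1 ≤ n_l)
    (cbar kφ cA : ℝ) (hcbar0 : 0 ≤ cbar) (hcbar1 : cbar < 1) (hkφ : 0 ≤ kφ)
    (hcA0 : 0 < cA) (hcA1 : cA < 1)
    (hcAbig : Real.cos (Real.pi / 2 - Real.arccos (Real.sqrt (1 - cbar ^ 2))) < cA)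
    (a : Fin n_c → EuclideanSpace ℝ (Fin n_u)) (ha : ∀ j, ‖a j‖ = 1)
    (b c : Fin n_c → ℝ) (hc : ∀ j, 0 ≤ c j ∧ c j ≤ cbar)
    (s : EuclideanSpace ℝ (Fin n_u))
    (hs : ∀ j, ⟪a j, s⟫ + c j * ‖s‖ ≤ b j)
    (l : Fin n_l → EuclideanSpace ℝ (Fin n_u)) (hl : ∀ i, ‖l i‖ = 1)
    (hbasis : ∀ l0 : EuclideanSpace ℝ (Fin n_u), ‖l0‖ = 1 →
      n_u ≤ {i : Fin n_l | cA ≤ ⟪l i, l0⟫}.ncard ∧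
      ∃ coef : Fin n_l → ℝ, (∀ i, 0 ≤ coef i) ∧
        (∀ i, coef i ≠ 0 → cA ≤ ⟪l i, l0⟫) ∧ l0 = ∑ i, coef i • l i)
    (cbarA : ℝ)
    (hcbarA : cbarA = Real.cos (Real.arccos (Real.sqrt (1 - cbar ^ 2)) + Real.arccos cA))
    (bL : Fin n_l → ℝ)
    (hbL : ∀ i, bL i = ⟪l i, s⟫ +
      ⨅ j : Fin n_c, (max ⟪l i, a j⟫ cbarA * ((b j - ⟪a j, s⟫ - c j * ‖s‖) / (1 + c j))
        + max (kφ * (cbarA - ⟪l i, a j⟫)) 0)) :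
    (∀ i, ⟪l i, s⟫ ≤ bL i) ∧
    (∀ u : EuclideanSpace ℝ (Fin n_u),
      (∀ i, ⟪l i, u⟫ ≤ bL i) → ∀ j, ⟪a j, u⟫ + c j * ‖u‖ ≤ b j) := by
  haveI : Nonempty (Fin n_c) := ⟨⟨0, hnc⟩⟩
  have hcbarsq : (0 : ℝ) ≤ 1 - cbar ^ 2 := by nlinarith
  set θ : ℝ := Real.arccos (Real.sqrt (1 - cbar ^ 2)) with hθ
  have hθ0 : 0 ≤ θ := Real.arccos_nonneg _
  have hθhalf : θ ≤ Real.pi / 2 := Real.arccos_le_pi_div_two.mpr (Real.sqrt_nonneg _)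
  -- cbarA > 0
  have hsum_lt : θ + Real.arccos cA < Real.pi / 2 := by
    have hmem1 : Real.cos (Real.pi / 2 - θ) ∈ Set.Icc (-1 : ℝ) 1 :=
      ⟨Real.neg_one_le_cos _, Real.cos_le_one _⟩
    have hmem2 : cA ∈ Set.Icc (-1 : ℝ) 1 := ⟨by linarith, hcA1.le⟩
    have := Real.strictAntiOn_arccos hmem1 hmem2 hcAbig
    rw [Real.arccos_cos (by linarith) (by linarith [Real.pi_pos])] at this
    linarith
  have hcbarApos : 0 < cbarA := by
    rw [hcbarA]
    exact Real.cos_pos_of_mem_Ioo ⟨by linarith [Real.pi_pos, Real.arccos_nonneg cA], by linarith⟩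
  have hd : ∀ j, 0 ≤ (b j - ⟪a j, s⟫ - c j * ‖s‖) / (1 + c j) := fun j =>
    div_nonneg (by linarith [hs j]) (by linarith [(hc j).1])
  have hterm : ∀ i j, 0 ≤ max ⟪l i, a j⟫ cbarA * ((b j - ⟪a j, s⟫ - c j * ‖s‖) / (1 + c j))
      + max (kφ * (cbarA - ⟪l i, a j⟫)) 0 := by
    intro i j
    have h1 : 0 ≤ max ⟪l i, a j⟫ cbarA := le_trans hcbarApos.le (le_max_right _ _)
    have h2 := mul_nonneg h1 (hd j)
    have h3 : (0 : ℝ) ≤ max (kφ * (cbarA - ⟪l i, a j⟫)) 0 := le_max_right _ _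
    linarith
  constructor
  · intro i
    rw [hbL i]
    have h0 : 0 ≤ ⨅ j : Fin n_c, (max ⟪l i, a j⟫ cbarA *
        ((b j - ⟪a j, s⟫ - c j * ‖s‖) / (1 + c j)) + max (kφ * (cbarA - ⟪l i, a j⟫)) 0) :=
      Real.iInf_nonneg (hterm i)
    linarith
  · intro u hu j
    have hcj0 := (hc j).1
    have hcjb := (hc j).2
    set v : EuclideanSpace ℝ (Fin n_u) := u - s with hv
    by_cases hv0 : v = 0
    · have hus : u = s := by rwa [sub_eq_zero] at hv0
      rw [hus]; exact hs j
    · have hvnorm : 0 < ‖v‖ := norm_pos_iff.mpr hv0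
      set l0 : EuclideanSpace ℝ (Fin n_u) := ‖v‖⁻¹ • v with hl0
      have hl0norm : ‖l0‖ = 1 := by
        rw [hl0, norm_smul, norm_inv, norm_norm, inv_mul_cancel₀ hvnorm.ne']
      set cj : ℝ := c j with hcjd
      set m : EuclideanSpace ℝ (Fin n_u) := a j + cj • l0 with hm
      set t : ℝ := ⟪a j, l0⟫ with ht
      have ht1 : |t| ≤ 1 := by
        have := abs_real_inner_le_norm (a j) l0
        rwa [ha j, hl0norm, one_mul] at this
      have ht1' := abs_le.mp ht1
      have haa : ⟪a j, a j⟫ = (1 : ℝ) := by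
        rw [real_inner_self_eq_norm_sq, ha j]; norm_num
      have hmnormsq : ‖m‖ ^ 2 = 1 + 2 * cj * t + cj ^ 2 := by
        rw [hm, norm_add_sq_real, real_inner_smul_right, norm_smul, ha j, hl0norm, ← ht]
        simp [abs_of_nonneg hcj0]
        ring
      have hmnorm_pos : 0 < ‖m‖ := by
        have h2 : (0 : ℝ) < ‖m‖ ^ 2 := by nlinarith
        by_contra hcon
        push_neg at hcon
        have : ‖m‖ = 0 := le_antisymm hcon (norm_nonneg _)
        rw [this] at h2; norm_num at h2
      set w : EuclideanSpace ℝ (Fin n_u) := ‖m‖⁻¹ • m with hw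
      have hwnorm : ‖w‖ = 1 := by
        rw [hw, norm_smul, norm_inv, norm_norm, inv_mul_cancel₀ hmnorm_pos.ne']
      have hma : ⟪m, a j⟫ = 1 + cj * t := by
        rw [hm, inner_add_left, real_inner_smul_left, haa, real_inner_comm (a j) l0, ← ht]
      have hcjt : (0 : ℝ) < 1 + cj * t := by nlinarith
      -- (K1)
      have hwa : Real.sqrt (1 - cbar ^ 2) ≤ ⟪w, a j⟫ := by
        have hkey : Real.sqrt (1 - cbar ^ 2) * ‖m‖ ≤ 1 + cj * t := by
          have h1 : (Real.sqrt (1 - cbar ^ 2) * ‖m‖) ^ 2 ≤ (1 + cj * t) ^ 2 := by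
            rw [mul_pow, Real.sq_sqrt hcbarsq, hmnormsq]
            nlinarith [sq_nonneg (cj * t + cj ^ 2),
              mul_nonneg (by nlinarith : (0 : ℝ) ≤ cbar ^ 2 - cj ^ 2)
                (by nlinarith : (0 : ℝ) ≤ 1 + 2 * cj * t + cj ^ 2)]
          have h3 : 0 ≤ Real.sqrt (1 - cbar ^ 2) * ‖m‖ := by positivity
          nlinarith
        have hwa' : ⟪w, a j⟫ = ‖m‖⁻¹ * (1 + cj * t) := by
          rw [hw, real_inner_smul_left, hma]
        rw [hwa', le_inv_mul_iff₀ hmnorm_pos, mul_comm]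
        exact hkey
      -- positive combination for w
      obtain ⟨coef, hc0, hcS, hwsum⟩ := (hbasis w hwnorm).2
      have hsupp : ∀ i, coef i ≠ 0 → cbarA ≤ ⟪l i, a j⟫ := by
        intro i hi
        have h1 : cA ≤ ⟪l i, w⟫ := hcS i hi
        have h2 := inner_cos_bound (hl i) hwnorm (ha j) hcA0.le (Real.sqrt_nonneg _) h1 hwa
        rw [hcbarA, add_comm]
        exact h2
      set dj : ℝ := (b j - ⟪a j, s⟫ - cj * ‖s‖) / (1 + cj) with hdj
      have hdj0 : 0 ≤ dj := hd j
      -- (K3)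
      have hvi : ∀ i, coef i ≠ 0 → ⟪l i, v⟫ ≤ ⟪l i, a j⟫ * dj := by
        intro i hi
        have h1 : ⟪l i, u⟫ ≤ bL i := hu i
        rw [hbL i] at h1
        have h2 : (⨅ j' : Fin n_c, (max ⟪l i, a j'⟫ cbarA *
            ((b j' - ⟪a j', s⟫ - c j' * ‖s‖) / (1 + c j')) +
            max (kφ * (cbarA - ⟪l i, a j'⟫)) 0)) ≤
            max ⟪l i, a j⟫ cbarA * ((b j - ⟪a j, s⟫ - cj * ‖s‖) / (1 + cj)) +
            max (kφ * (cbarA - ⟪l i, a j⟫)) 0 :=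
          ciInf_le (Set.finite_range _).bddBelow j
        have h3 : ⟪l i, v⟫ = ⟪l i, u⟫ - ⟪l i, s⟫ := by rw [hv, inner_sub_right]
        have hA := hsupp i hi
        have e1 : max ⟪l i, a j⟫ cbarA = ⟪l i, a j⟫ := max_eq_left hA
        have e2 : max (kφ * (cbarA - ⟪l i, a j⟫)) 0 = 0 :=
          max_eq_right (mul_nonpos_of_nonneg_of_nonpos hkφ (by linarith))
        rw [e1, e2] at h2
        rw [h3, hdj]
        linarith
      -- (K4)
      have hwv_eq : ⟪w, v⟫ = ∑ i, coef i * ⟪l i, v⟫ := by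
        rw [hwsum, sum_inner]
        simp only [real_inner_smul_left]
      have hwa_eq : ⟪w, a j⟫ = ∑ i, coef i * ⟪l i, a j⟫ := by
        rw [hwsum, sum_inner]
        simp only [real_inner_smul_left]
      have hwv : ⟪w, v⟫ ≤ ⟪w, a j⟫ * dj := by
        rw [hwv_eq, hwa_eq, Finset.sum_mul]
        apply Finset.sum_le_sum
        intro i _
        by_cases hi : coef i = 0
        · simp [hi]
        · rw [mul_assoc]
          exact mul_le_mul_of_nonneg_left (hvi i hi) (hc0 i)
      -- (K5)
      have hl0v : ⟪l0, v⟫ = ‖v‖ := by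
        rw [hl0, real_inner_smul_left, real_inner_self_eq_norm_sq]
        field_simp
      have hmv : ⟪m, v⟫ = ⟪a j, v⟫ + cj * ‖v‖ := by
        rw [hm, inner_add_left, real_inner_smul_left, hl0v]
      have hmw : ⟪m, v⟫ = ‖m‖ * ⟪w, v⟫ := by
        rw [hw, real_inner_smul_left]
        field_simp
      have hmwa : ‖m‖ * ⟪w, a j⟫ = ⟪m, a j⟫ := by
        rw [hw, real_inner_smul_left]
        field_simp
      have hstep : ⟪a j, v⟫ + cj * ‖v‖ ≤ (1 + cj * t) * dj := by
        have h1 : ‖m‖ * ⟪w, v⟫ ≤ ‖m‖ * (⟪w, a j⟫ * dj) :=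
          mul_le_mul_of_nonneg_left hwv hmnorm_pos.le
        rw [← mul_assoc, hmwa, hma] at h1
        rw [← hmv, hmw]
        exact h1
      have hfin : (1 + cj * t) * dj ≤ (1 + cj) * dj :=
        mul_le_mul_of_nonneg_right (by nlinarith) hdj0
      have hdj_eq : (1 + cj) * dj = b j - ⟪a j, s⟫ - cj * ‖s‖ := by
        rw [hdj]
        field_simp
      have hnormu : ‖u‖ ≤ ‖s‖ + ‖v‖ := by
        have husv : u = s + v := by rw [hv]; abel
        rw [husv]
        exact norm_add_le s v
      have hinneru : ⟪a j, u⟫ = ⟪a j, s⟫ + ⟪a j, v⟫ := by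
        rw [hv, inner_sub_right]; ring
      have hcu : cj * ‖u‖ ≤ cj * (‖s‖ + ‖v‖) := mul_le_mul_of_nonneg_left hnormu hcj0
      rw [hinneru]
      linarith
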